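/- Let n ≥ 3, let K ⊆ ℝⁿ be a proper subdual cone, let A ∈ ℝ^{n×n} be symmetric, and let {v¹, …, vⁿ} be an orthonormal system of eigenvectors of A with A v¹ = λ v¹, A vʲ = μ vʲ for j = 2, …, n−1, and A vⁿ = η vⁿ, where λ < μ < η. Let p, q ∈ ℝⁿ be the Moreau decomposition of vⁿ with respect to K: p ∈ K, q ∈ K*, vⁿ = p − q and ⟨p, q⟩ = 0 (so p = P_K(vⁿ), q = P_{K*}(−vⁿ), and |vⁿ|^K = p + q). Assume v¹ − √((η − μ)/(μ − λ))·(p + q) ∈ K*. Then the sublevel set [φ_A ≤ c] = {x ∈ int(K) : ⟨Ax, x⟩ ≤ c‖x‖²} is convex for every c ∈ ℝ (i.e., q_A is spherically quasi-convex). -/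

import Mathlib

open scoped RealInnerProductSpace

/-- The quadratic form `x ↦ ⟨A x, x⟩` associated with a matrix `A`. -/
noncomputable def quadForm {n : ℕ} (A : Matrix (Fin n) (Fin n) ℝ)
    (x : EuclideanSpace ℝ (Fin n)) : ℝ :=
  ⟪Matrix.toEuclideanLin A x, x⟫

/-- `K` is a cone: closed under multiplication by positive scalars. -/
def IsCone {n : ℕ} (K : Set (EuclideanSpace ℝ (Fin n))) : Prop :=
  ∀ ⦃t : ℝ⦄, 0 < t → ∀ ⦃x⦄, x ∈ K → t • x ∈ K

/-- A proper cone: a pointed closed convex cone with nonempty interior. -/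
def IsProperCone {n : ℕ} (K : Set (EuclideanSpace ℝ (Fin n))) : Prop :=
  IsCone K ∧ Convex ℝ K ∧ IsClosed K ∧ K ∩ (-K) ⊆ {0} ∧ (interior K).Nonempty

/-- The dual cone `K* = {u : ⟨u, y⟩ ≥ 0 for all y ∈ K}`. -/
def dualCone {n : ℕ} (K : Set (EuclideanSpace ℝ (Fin n))) : Set (EuclideanSpace ℝ (Fin n)) :=
  {u | ∀ y ∈ K, 0 ≤ ⟪u, y⟫}

/-- The sublevel set `[φ_A ≤ c] = {x ∈ int K : ⟨A x, x⟩ ≤ c ‖x‖²}`. -/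
noncomputable def sublevel {n : ℕ} (A : Matrix (Fin n) (Fin n) ℝ)
    (K : Set (EuclideanSpace ℝ (Fin n))) (c : ℝ) : Set (EuclideanSpace ℝ (Fin n)) :=
  {x ∈ interior K | quadForm A x ≤ c * ‖x‖ ^ 2}

set_option maxHeartbeats 1000000 in
/-- Theorem 2 of the paper: if `A` has eigenvalues `λ < μ = ⋯ = μ < η`, with `vⁿ = p - q`
the Moreau decomposition of `vⁿ` w.r.t. `K`, and `v¹ - √((η-μ)/(μ-λ))·(p + q) ∈ K*`,
then all sublevel sets `[φ_A ≤ c]` are convex (i.e. `q_A` is spherically quasi-convex). -/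
theorem stmt14 (n : ℕ) [NeZero n] (hn : 3 ≤ n)
    (K : Set (EuclideanSpace ℝ (Fin n))) (hK : IsProperCone K) (hsub : K ⊆ dualCone K)
    (A : Matrix (Fin n) (Fin n) ℝ) (hA : A.IsSymm)
    (v : Fin n → EuclideanSpace ℝ (Fin n)) (hv : Orthonormal ℝ v)
    (lam mu eta : ℝ) (hlm : lam < mu) (hme : mu < eta)
    (h1 : Matrix.toEuclideanLin A (v 0) = lam • v 0)
    (hmid : ∀ i : Fin n, i ≠ 0 → i ≠ ⟨n - 1, by omega⟩ →
      Matrix.toEuclideanLin A (v i) = mu • v i)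
    (hlast : Matrix.toEuclideanLin A (v ⟨n - 1, by omega⟩) = eta • v ⟨n - 1, by omega⟩)
    (p q : EuclideanSpace ℝ (Fin n))
    (hp : p ∈ K) (hq : q ∈ dualCone K) (hMoreau : v ⟨n - 1, by omega⟩ = p - q)
    (horth : ⟪p, q⟫ = 0)
    (hcond : v 0 - Real.sqrt ((eta - mu) / (mu - lam)) • (p + q) ∈ dualCone K) :
    ∀ c : ℝ, Convex ℝ (sublevel A K c) := by
  have hn1 : n - 1 < n := by omega
  set il : Fin n := ⟨n - 1, hn1⟩ with hil
  have hil0 : il ≠ 0 := by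
    intro h
    have := congrArg Fin.val h
    simp [hil] at this
    omega
  have hvij : ∀ i j : Fin n, ⟪v i, v j⟫ = if i = j then (1:ℝ) else 0 :=
    orthonormal_iff_ite.mp hv
  have hcard : Fintype.card (Fin n) = Module.finrank ℝ (EuclideanSpace ℝ (Fin n)) := by
    simp [finrank_euclideanSpace]
  let b := basisOfLinearIndependentOfCardEqFinrank hv.linearIndependent hcard
  have hb : ⇑b = v := coe_basisOfLinearIndependentOfCardEqFinrank _ _
  let S : EuclideanSpace ℝ (Fin n) →ₗ[ℝ] EuclideanSpace ℝ (Fin n) :=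
    mu • LinearMap.id + (lam - mu) • ((innerSL ℝ (v 0)).toLinearMap.smulRight (v 0))
      + (eta - mu) • ((innerSL ℝ (v il)).toLinearMap.smulRight (v il))
  have hS : ∀ w, S w = mu • w + ((lam - mu) * ⟪v 0, w⟫) • v 0
      + ((eta - mu) * ⟪v il, w⟫) • v il := by
    intro w
    simp [S, LinearMap.smulRight_apply, smul_smul, innerSL_apply_apply]
  have hTS : Matrix.toEuclideanLin A = S := by
    apply b.ext
    intro i
    simp only [hb, hS]
    by_cases h0 : i = 0
    · subst h0
      rw [h1, hvij 0 0, hvij il 0]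
      simp [hil0]
      module
    · by_cases hl : i = il
      · subst hl
        rw [hlast, hvij 0 il, hvij il il]
        simp [Ne.symm hil0]
        module
      · rw [hmid i h0 hl, hvij 0 i, hvij il i]
        simp [Ne.symm h0, Ne.symm hl]
  have quad_eq : ∀ x, quadForm A x
      = mu * ‖x‖ ^ 2 + (lam - mu) * ⟪v 0, x⟫ ^ 2 + (eta - mu) * ⟪v il, x⟫ ^ 2 := by
    intro x
    rw [quadForm, hTS, hS, inner_add_left, inner_add_left, real_inner_smul_left,
      real_inner_smul_left, real_inner_smul_left, real_inner_self_eq_norm_sq]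
    ring
  -- the key cone inequality
  have key : ∀ x ∈ K, 0 ≤ ⟪v 0, x⟫ ∧
      (eta - mu) * ⟪v il, x⟫ ^ 2 ≤ (mu - lam) * ⟪v 0, x⟫ ^ 2 := by
    intro x hx
    have hpx : 0 ≤ ⟪p, x⟫ := hsub hp x hx
    have hqx : 0 ≤ ⟪q, x⟫ := hq x hx
    have hc := hcond x hx
    rw [inner_sub_left, real_inner_smul_left, inner_add_left] at hc
    have hM : v il = p - q := hMoreau
    have hvlx : ⟪v il, x⟫ = ⟪p, x⟫ - ⟪q, x⟫ := by rw [hM, inner_sub_left]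
    set t := Real.sqrt ((eta - mu) / (mu - lam)) with htdef
    have ht : 0 ≤ t := Real.sqrt_nonneg _
    have ht2 : t ^ 2 = (eta - mu) / (mu - lam) :=
      Real.sq_sqrt (div_nonneg (by linarith) (by linarith))
    have ht2' : (mu - lam) * t ^ 2 = eta - mu := by
      rw [ht2, mul_comm, div_mul_cancel₀ _ (by linarith : mu - lam ≠ 0)]
    have hts : 0 ≤ t * (⟪p, x⟫ + ⟪q, x⟫) := mul_nonneg ht (by linarith)
    have htw : t * (⟪p, x⟫ + ⟪q, x⟫) ≤ ⟪v 0, x⟫ := by linarith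
    have hw0 : 0 ≤ ⟪v 0, x⟫ := le_trans hts htw
    refine ⟨hw0, ?_⟩
    have hsq : (t * (⟪p, x⟫ + ⟪q, x⟫)) ^ 2 ≤ ⟪v 0, x⟫ ^ 2 :=
      pow_le_pow_left₀ hts htw 2
    have h7 : (mu - lam) * (t * (⟪p, x⟫ + ⟪q, x⟫)) ^ 2
        = (eta - mu) * (⟪p, x⟫ + ⟪q, x⟫) ^ 2 := by
      rw [mul_pow, ← mul_assoc, ht2']
    have h8 : (mu - lam) * (t * (⟪p, x⟫ + ⟪q, x⟫)) ^ 2 ≤ (mu - lam) * ⟪v 0, x⟫ ^ 2 :=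
      mul_le_mul_of_nonneg_left hsq (by linarith)
    rw [h7] at h8
    rw [hvlx]
    nlinarith [mul_nonneg (mul_nonneg (by linarith : (0:ℝ) ≤ eta - mu) hpx) hqx]
  intro c
  by_cases hc : mu ≤ c
  · have hset : sublevel A K c = interior K := by
      ext x
      simp only [sublevel, Set.mem_setOf_eq]
      refine ⟨fun h => h.1, fun h => ⟨h, ?_⟩⟩
      obtain ⟨hw, hkey⟩ := key x (interior_subset h)
      rw [quad_eq]
      nlinarith [sq_nonneg ‖x‖]
    rw [hset]
    exact hK.2.1.interior
  · push_neg at hc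
    rintro x ⟨hxK, hxq⟩ y ⟨hyK, hyq⟩ a bb ha hb hab
    refine ⟨hK.2.1.interior hxK hyK ha hb hab, ?_⟩
    have hmc : (0:ℝ) < mu - c := by linarith
    have hem : (0:ℝ) < eta - mu := by linarith
    let Φ : EuclideanSpace ℝ (Fin n) → WithLp 2 (EuclideanSpace ℝ (Fin n) × ℝ) :=
      fun w => (WithLp.equiv 2 _).symm
        (Real.sqrt (mu - c) • w, Real.sqrt (eta - mu) * ⟪v il, w⟫)
    have hnorm : ∀ w, ‖Φ w‖ ^ 2 = (mu - c) * ‖w‖ ^ 2 + (eta - mu) * ⟪v il, w⟫ ^ 2 := by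
      intro w
      rw [WithLp.prod_norm_sq_eq_of_L2]
      simp only [Φ, WithLp.equiv_symm_apply, WithLp.toLp_fst, WithLp.toLp_snd, norm_smul,
        Real.norm_eq_abs, mul_pow, sq_abs, Real.sq_sqrt hmc.le, Real.sq_sqrt hem.le]
    have memiff : ∀ w, quadForm A w ≤ c * ‖w‖ ^ 2 ↔
        (mu - c) * ‖w‖ ^ 2 + (eta - mu) * ⟪v il, w⟫ ^ 2 ≤ (mu - lam) * ⟪v 0, w⟫ ^ 2 := by
      intro w
      rw [quad_eq]
      constructor <;> intro <;> linarith
    have hbound : ∀ w, w ∈ interior K → quadForm A w ≤ c * ‖w‖ ^ 2 →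
        ‖Φ w‖ ≤ Real.sqrt (mu - lam) * ⟪v 0, w⟫ := by
      intro w hwK hwq
      have hw0 : 0 ≤ ⟪v 0, w⟫ := (key w (interior_subset hwK)).1
      have h2 : ‖Φ w‖ ^ 2 ≤ (Real.sqrt (mu - lam) * ⟪v 0, w⟫) ^ 2 := by
        rw [hnorm, mul_pow, Real.sq_sqrt (by linarith : (0:ℝ) ≤ mu - lam)]
        exact (memiff w).mp hwq
      exact (pow_le_pow_iff_left₀ (norm_nonneg _)
        (mul_nonneg (Real.sqrt_nonneg _) hw0) two_ne_zero).mp h2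
    have hΦlin : Φ (a • x + bb • y) = a • Φ x + bb • Φ y := by
      simp only [Φ, WithLp.equiv_symm_apply, ← WithLp.toLp_smul, ← WithLp.toLp_add]
      congr 1
      rw [Prod.smul_mk, Prod.smul_mk, Prod.mk_add_mk, Prod.mk.injEq]
      constructor
      · simp [smul_add, smul_smul, mul_comm]
      · simp only [inner_add_right, real_inner_smul_right, smul_eq_mul]
        ring
    have hchain : ‖Φ (a • x + bb • y)‖ ≤ Real.sqrt (mu - lam) * ⟪v 0, a • x + bb • y⟫ := by
      rw [hΦlin]
      calc ‖a • Φ x + bb • Φ y‖ ≤ ‖a • Φ x‖ + ‖bb • Φ y‖ := norm_add_le _ _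
        _ = a * ‖Φ x‖ + bb * ‖Φ y‖ := by
            rw [norm_smul, norm_smul, Real.norm_eq_abs, Real.norm_eq_abs,
              abs_of_nonneg ha, abs_of_nonneg hb]
        _ ≤ a * (Real.sqrt (mu - lam) * ⟪v 0, x⟫) + bb * (Real.sqrt (mu - lam) * ⟪v 0, y⟫) := by
            gcongr
            · exact hbound x hxK hxq
            · exact hbound y hyK hyq
        _ = Real.sqrt (mu - lam) * ⟪v 0, a • x + bb • y⟫ := by
            rw [inner_add_right, real_inner_smul_right, real_inner_smul_right]
            ring
    rw [memiff, ← hnorm]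
    calc ‖Φ (a • x + bb • y)‖ ^ 2 ≤ (Real.sqrt (mu - lam) * ⟪v 0, a • x + bb • y⟫) ^ 2 := by
          exact pow_le_pow_left₀ (norm_nonneg _) hchain 2
      _ = (mu - lam) * ⟪v 0, a • x + bb • y⟫ ^ 2 := by
          rw [mul_pow, Real.sq_sqrt (by linarith : (0:ℝ) ≤ mu - lam)]
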